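/- Let Q_1, …, Q_J be d×d Hermitian unitary complex matrices such that every pair Q_i, Q_j either commutes or anticommutes, let λ_1, …, λ_J be nonnegative reals, and let L_j(A) = λ_j(Q_j A Q_j − A). Then the exponential of the endomorphism ∑_{j=1}^{J} L_j of the space of d×d complex matrices equals the composition N_J ∘ ⋯ ∘ N_1, where N_j(A) = (1 − p_j) A + p_j Q_j A Q_j and p_j = (1 − e^{−2λ_j})/2. -/

import Mathlib

open Matrix

attribute [local instance] Matrix.frobeniusNormedAddCommGroup Matrix.frobeniusNormedSpace

lemma exp_smul_idem {𝔸 : Type*} [NormedRing 𝔸] [NormedAlgebra ℂ 𝔸] [CompleteSpace 𝔸]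
    (e : 𝔸) (he : e * e = e) (t : ℂ) :
    NormedSpace.exp (t • e) = 1 + (NormedSpace.exp t - 1) • e := by
  have hpow : ∀ n : ℕ, e ^ (n + 1) = e := by
    intro n; induction n with
    | zero => simp
    | succ n ih => rw [pow_succ, ih, he]
  have hsum : Summable fun n : ℕ => (Nat.factorial n : ℂ)⁻¹ • (t • e) ^ n :=
    NormedSpace.expSeries_summable' (t • e)
  have hsumt : Summable fun n : ℕ => (Nat.factorial n : ℂ)⁻¹ • t ^ n :=
    NormedSpace.expSeries_summable' t
  have hsumt' : Summable fun n : ℕ => (Nat.factorial (n + 1) : ℂ)⁻¹ * t ^ (n + 1) := by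
    have := (hsumt.comp_injective Nat.succ_injective)
    simpa [Function.comp_def, smul_eq_mul] using this
  have hterm : ∀ n : ℕ, ((Nat.factorial (n + 1) : ℂ)⁻¹) • (t • e) ^ (n + 1)
      = (((Nat.factorial (n + 1) : ℂ)⁻¹) * t ^ (n + 1)) • e := by
    intro n; rw [smul_pow, hpow, smul_smul]
  simp only [NormedSpace.exp_eq_tsum ℂ]
  rw [Summable.tsum_eq_zero_add hsum]
  have h1 : ∑' n : ℕ, (Nat.factorial (n + 1) : ℂ)⁻¹ • (t • e) ^ (n + 1)
      = (∑' n : ℕ, (Nat.factorial (n + 1) : ℂ)⁻¹ * t ^ (n + 1)) • e := by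
    rw [tsum_congr hterm, Summable.tsum_smul_const hsumt']
  have h2 : (∑' n : ℕ, (Nat.factorial (n + 1) : ℂ)⁻¹ * t ^ (n + 1))
      = NormedSpace.exp t - 1 := by
    have := Summable.tsum_eq_zero_add hsumt
    simp only [NormedSpace.exp_eq_tsum ℂ]; rw [this]
    simp [smul_eq_mul]
  rw [h1, h2]
  simp [NormedSpace.exp_eq_tsum ℂ]

instance matrixCLMIsTopologicalRing (d : ℕ) :
    IsTopologicalRing (Matrix (Fin d) (Fin d) ℂ →L[ℂ] Matrix (Fin d) (Fin d) ℂ) :=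
  @NonUnitalSeminormedRing.toIsTopologicalRing _
    (@ContinuousLinearMap.toNormedRing ℂ _ _ _ _).toNonUnitalNormedRing.toNonUnitalSeminormedRing

set_option synthInstance.maxHeartbeats 1000000 in
set_option maxHeartbeats 1000000 in
/-- **Exponential of a sum of commuting Pauli-Lindblad generators factorizes into
Pauli channels.**  Let `Q 1, …, Q J` be Hermitian unitary `d×d` complex matrices
which pairwise commute or anticommute, `λ j ≥ 0`, and let `L j` be the continuous
linear endomorphism `A ↦ λ j (Q j A Q j − A)`.  Then `exp (∑ j, L j)` equals the
composition `N J ∘ ⋯ ∘ N 1`, where `N j A = (1 − p j) A + p j Q j A Q j` and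
`p j = (1 − e^{−2 λ j})/2`. -/
theorem exp_sum_pauli_lindblad (d J : ℕ) (Q : Fin J → Matrix (Fin d) (Fin d) ℂ)
    (hQ_herm : ∀ j, (Q j)ᴴ = Q j) (hQ_unit : ∀ j, Q j * Q j = 1)
    (hQ_comm : ∀ i j, Q i * Q j = Q j * Q i ∨ Q i * Q j = -(Q j * Q i))
    (lam : Fin J → ℝ) (hlam : ∀ j, 0 ≤ lam j)
    (L : Fin J → (Matrix (Fin d) (Fin d) ℂ →L[ℂ] Matrix (Fin d) (Fin d) ℂ))
    (hL : ∀ j A, L j A = (lam j : ℂ) • (Q j * A * Q j - A))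
    (p : Fin J → ℝ) (hp : ∀ j, p j = (1 - Real.exp (-2 * lam j)) / 2)
    (N : Fin J → (Matrix (Fin d) (Fin d) ℂ → Matrix (Fin d) (Fin d) ℂ))
    (hN : ∀ j A, N j A = (1 - (p j : ℂ)) • A + (p j : ℂ) • (Q j * A * Q j)) :
    ∀ A, (NormedSpace.exp (∑ j, L j)) A
      = (List.finRange J).foldl (fun B j => N j B) A := by
    -- key matrix identity from commutation/anticommutation
  have key : ∀ i j (A : Matrix (Fin d) (Fin d) ℂ),
      Q i * (Q j * A * Q j) * Q i = Q j * (Q i * A * Q i) * Q j := by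
    intro i j A
    have h1 : Q i * (Q j * A * Q j) * Q i = (Q i * Q j) * A * (Q j * Q i) := by
      noncomm_ring
    have h2 : Q j * (Q i * A * Q i) * Q j = (Q j * Q i) * A * (Q i * Q j) := by
      noncomm_ring
    rw [h1, h2]
    rcases hQ_comm i j with h | h
    · rw [h]
    · have h' : Q j * Q i = -(Q i * Q j) := by rw [h]; simp
      rw [h, h']
      simp [neg_mul, mul_neg]
  have hcomm : ∀ i j, Commute (L i) (L j) := by
    intro i j
    ext A
    simp only [ContinuousLinearMap.mul_apply]
    rw [hL j A, ContinuousLinearMap.map_smul, hL i, hL i A, ContinuousLinearMap.map_smul, hL j]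
    have inner : Q i * (Q j * A * Q j - A) * Q i - (Q j * A * Q j - A)
        = Q j * (Q i * A * Q i - A) * Q j - (Q i * A * Q i - A) := by
      simp only [mul_sub, sub_mul]
      rw [key i j A]
      abel
    rw [inner, smul_comm]
  -- exponential of a single generator is the Pauli channel
  have hstep : ∀ j A, NormedSpace.exp (L j) A = N j A := by
    intro j A
    by_cases h0 : lam j = 0
    · have hL0 : L j = 0 := by ext B; rw [hL]; simp [h0]
      have hp0 : p j = 0 := by rw [hp]; simp [h0]
      rw [hL0, NormedSpace.exp_zero, hN, hp0]
      simp
    · set c : ℂ := ((-2 * lam j : ℝ) : ℂ) with hc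
      have hlc : (lam j : ℂ) ≠ 0 := by exact_mod_cast h0
      have hr : (-2 * lam j : ℝ) ≠ 0 := mul_ne_zero (by norm_num) h0
      have hc0 : c ≠ 0 := by rw [hc]; exact_mod_cast hr
      have hQBQ : ∀ B : Matrix (Fin d) (Fin d) ℂ, Q j * (Q j * B * Q j) * Q j = B := by
        intro B
        have : Q j * (Q j * B * Q j) * Q j = (Q j * Q j) * B * (Q j * Q j) := by noncomm_ring
        rw [this, hQ_unit]
        simp
      have hsq : L j * L j = c • L j := by
        ext B
        simp only [ContinuousLinearMap.mul_apply, ContinuousLinearMap.smul_apply]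
        rw [hL j B, ContinuousLinearMap.map_smul, hL j]
        have expand : Q j * (Q j * B * Q j - B) * Q j - (Q j * B * Q j - B)
            = (-2 : ℂ) • (Q j * B * Q j - B) := by
          simp only [mul_sub, sub_mul]
          rw [hQBQ B]
          module
        rw [expand, smul_smul, smul_smul, smul_smul]
        congr 1
        rw [hc]
        push_cast
        ring
      have he : ((c⁻¹ : ℂ) • L j) * ((c⁻¹ : ℂ) • L j) = (c⁻¹ : ℂ) • L j := by
        ext B
        have hsqB : L j (L j B) = c • (L j B) := by
          have := ContinuousLinearMap.ext_iff.mp hsq B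
          simpa using this
        simp only [ContinuousLinearMap.mul_apply, ContinuousLinearMap.smul_apply,
          ContinuousLinearMap.map_smul]
        rw [hsqB, smul_smul, smul_smul]
        congr 1
        field_simp
      have hLj : L j = c • ((c⁻¹ : ℂ) • L j) := (smul_inv_smul₀ hc0 _).symm
      rw [hLj, show NormedSpace.exp (c • (c⁻¹ : ℂ) • L j) = 1 + (NormedSpace.exp c - 1) • ((c⁻¹ : ℂ) • L j) from
        @exp_smul_idem _ (@ContinuousLinearMap.toNormedRing ℂ _ _ _ _) _ _ _ he c]
      have hexpc : NormedSpace.exp c = ((Real.exp (-2 * lam j) : ℝ) : ℂ) := by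
        rw [← Complex.exp_eq_exp_ℂ, hc, Complex.ofReal_exp]
      simp only [ContinuousLinearMap.add_apply, ContinuousLinearMap.one_apply,
        ContinuousLinearMap.smul_apply]
      rw [hL j A, hN j A, hexpc]
      have hsc : ((Real.exp (-2 * lam j) : ℂ) - 1) • ((c⁻¹ : ℂ) • ((lam j : ℂ) • (Q j * A * Q j - A)))
          = ((p j : ℂ)) • (Q j * A * Q j - A) := by
        rw [smul_smul, smul_smul]
        congr 1
        rw [hp, hc]
        have h2l : ((-2 * lam j : ℝ) : ℂ) ≠ 0 := by exact_mod_cast hr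
        field_simp
        push_cast
        ring
      rw [hsc]
      module
  -- composition lemma
  have hmain : ∀ l : List (Fin J), ∀ A,
      NormedSpace.exp ((l.map L).sum) A = l.foldl (fun B j => N j B) A := by
    intro l
    induction l with
    | nil => intro A; simp [NormedSpace.exp_zero]
    | cons j t ih =>
      intro A
      have hct : Commute (L j) ((t.map L).sum) := by
        apply Commute.list_sum_right
        intro x hx
        rcases List.mem_map.mp hx with ⟨i, _, rfl⟩
        exact hcomm j i
      have hsplit : NormedSpace.exp (L j + (t.map L).sum)
          = NormedSpace.exp ((t.map L).sum) * NormedSpace.exp (L j) := by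
        rw [add_comm]
        exact @NormedSpace.exp_add_of_commute _ (@ContinuousLinearMap.toNormedRing ℂ _ _ _ _)
          (@NormedAlgebra.restrictScalars ℚ ℂ _ _ _ _ (@ContinuousLinearMap.toNormedRing ℂ _ _ _ _).toSeminormedRing _)
          _ _ _ hct.symm
      simp only [List.map_cons, List.sum_cons, List.foldl_cons]
      rw [hsplit, ContinuousLinearMap.mul_apply, hstep, ih]
  intro A
  have hsum : (∑ j, L j) = ((List.finRange J).map L).sum := Fin.sum_univ_def L
  rw [hsum, hmain]
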